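/- Let f = (f_n) ∈ M_1, let η > 0 and ω > 0, let n ∈ ℕ and E ∈ D_n be given. Then there exist g = (g_k) ∈ M_1, m ∈ ℕ and F ∈ D_m such that: (a) g_1 = … = g_n = 0; (b) ‖g‖_1 < η; (c) m > n and F ⊆ E; (d) (f_m + g_m)(F) > ω, where (f_m + g_m)(F) = (1/P(F)) ∫_F (f_m + g_m) dP. -/

import Mathlib

open MeasureTheory Filter Set
open scoped ENNReal Topology

noncomputable section

namespace MartingalePaper

variable {Ω : Type}

/-- The discrete topology on `Set Ω`; each finite partition `D n` thus carries the
discrete topology, and `ℕ → Set Ω` the product topology. -/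
instance : TopologicalSpace (Set Ω) := ⊥

/-- `(D n)` is a sequence of finite measurable partitions of `Ω`, each refined by the next. -/
def IsPartitionSeq [MeasurableSpace Ω] (D : ℕ → Finset (Set Ω)) : Prop :=
  (∀ n, ∀ A ∈ D n, MeasurableSet A) ∧
  (∀ n, ∀ A ∈ D n, A.Nonempty) ∧
  (∀ n, (D n : Set (Set Ω)).PairwiseDisjoint id) ∧
  (∀ n, ⋃ A ∈ D n, A = (Set.univ : Set Ω)) ∧
  (∀ n, ∀ A ∈ D (n + 1), ∃ B ∈ D n, A ⊆ B)

/-- Standing Assumptions (A). -/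
def AssumptionA [MeasurableSpace Ω] (P : Measure Ω) (D : ℕ → Finset (Set Ω)) : Prop :=
  (∀ n, ∀ A ∈ D n, 0 < P A) ∧ (∀ n, ∀ A ∈ D n, ∃ m, n < m ∧ A ∉ D m)

/-- The compact metrizable space `K` associated to the filtration: decreasing chains of atoms. -/
abbrev Kt (D : ℕ → Finset (Set Ω)) : Type _ :=
  {x : ℕ → Set Ω // (∀ n, x n ∈ D n) ∧ ∀ n m : ℕ, n ≤ m → x m ⊆ x n}

/-- The function on `Ω` determined by the values `f n A` on the atoms `A ∈ D n`. -/
def mval (D : ℕ → Finset (Set Ω)) (f : ℕ → Set Ω → ℝ) (n : ℕ) (w : Ω) : ℝ :=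
  ∑ A ∈ D n, A.indicator (fun _ => f n A) w

/-- A martingale adapted to the filtration `(σ(D n))`, in its canonical representation by
the (a.e. constant) values on the atoms:  `f n A` is the value of the `n`-th function on
the atom `A ∈ D n`. -/
def IsMart [MeasurableSpace Ω] (P : Measure Ω) (D : ℕ → Finset (Set Ω))
    (f : ℕ → Set Ω → ℝ) : Prop :=
  (∀ n, ∀ A : Set Ω, A ∉ D n → f n A = 0) ∧
  ∀ n m : ℕ, n ≤ m → ∀ A ∈ D n,
    ∫ w in A, mval D f n w ∂P = ∫ w in A, mval D f m w ∂P

/-- `‖f_n‖_{L^p}`. -/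
def lpNorm [MeasurableSpace Ω] (P : Measure Ω) (D : ℕ → Finset (Set Ω)) (p : ℝ≥0∞)
    (f : ℕ → Set Ω → ℝ) (n : ℕ) : ℝ≥0∞ :=
  eLpNorm (mval D f n) p P

/-- `‖f‖_p = sup_n ‖f_n‖_{L^p}`. -/
def martNorm [MeasurableSpace Ω] (P : Measure Ω) (D : ℕ → Finset (Set Ω)) (p : ℝ≥0∞)
    (f : ℕ → Set Ω → ℝ) : ℝ≥0∞ :=
  ⨆ n, lpNorm P D p f n

/-- `M_p`, the space of `L^p`-bounded martingales adapted to the filtration. -/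
def Mart [MeasurableSpace Ω] (P : Measure Ω) (D : ℕ → Finset (Set Ω)) (p : ℝ≥0∞) : Type _ :=
  {f : ℕ → Set Ω → ℝ // IsMart P D f ∧ martNorm P D p f ≠ ∞}

/-- The norm topology on `M_p`: the topology generated by the balls of the norm `‖·‖_p`
(which is exactly the topology of this metric). -/
instance [MeasurableSpace Ω] (P : Measure Ω) (D : ℕ → Finset (Set Ω)) (p : ℝ≥0∞) :
    TopologicalSpace (Mart P D p) :=
  TopologicalSpace.generateFrom
    {s | ∃ (f : Mart P D p) (ε : ℝ≥0∞), 0 < ε ∧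
      s = {g : Mart P D p | martNorm P D p (fun k A => g.1 k A - f.1 k A) < ε}}

/-- `limsup f_n(x) = +∞` and `liminf f_n(x) = -∞`. -/
def DivergesAt (D : ℕ → Finset (Set Ω)) (f : ℕ → Set Ω → ℝ) (x : Kt D) : Prop :=
  Filter.limsup (fun n => ((f n (x.1 n) : ℝ) : EReal)) Filter.atTop = ⊤ ∧
  Filter.liminf (fun n => ((f n (x.1 n) : ℝ) : EReal)) Filter.atTop = ⊥

section Aux
variable [MeasurableSpace Ω] {P : Measure Ω} [IsFiniteMeasure P] {D : ℕ → Finset (Set Ω)}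

lemma exists_superatom (hpart : IsPartitionSeq D) {j k : ℕ} (hjk : j ≤ k) :
    ∀ B ∈ D k, ∃ A ∈ D j, B ⊆ A := by
  obtain ⟨d, rfl⟩ := Nat.exists_eq_add_of_le hjk
  induction d with
  | zero => exact fun B hB => ⟨B, hB, subset_rfl⟩
  | succ d ih =>
    intro B hB
    obtain ⟨C, hC, hBC⟩ := hpart.2.2.2.2 (j + d) B hB
    obtain ⟨A, hA, hCA⟩ := ih (Nat.le_add_right _ _) C hC
    exact ⟨A, hA, hBC.trans hCA⟩

lemma atom_eq (hpart : IsPartitionSeq D) {j : ℕ} {A B : Set Ω}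
    (hA : A ∈ D j) (hB : B ∈ D j) {x : Ω} (hxA : x ∈ A) (hxB : x ∈ B) : A = B := by
  by_contra h
  exact (hpart.2.2.1 j (Finset.mem_coe.mpr hA) (Finset.mem_coe.mpr hB) h).le_bot ⟨hxA, hxB⟩

lemma exists_atom (hpart : IsPartitionSeq D) (k : ℕ) (x : Ω) : ∃ B ∈ D k, x ∈ B := by
  have h := hpart.2.2.2.1 k
  have hx : x ∈ ⋃ A ∈ D k, A := h ▸ Set.mem_univ x
  simpa using hx

lemma atom_subset_or_disjoint (hpart : IsPartitionSeq D) {j k : ℕ} (hjk : j ≤ k)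
    {B A : Set Ω} (hB : B ∈ D k) (hA : A ∈ D j) : B ⊆ A ∨ B ∩ A = ∅ := by
  obtain ⟨A', hA', hBA'⟩ := exists_superatom hpart hjk B hB
  by_cases h : A' = A
  · exact Or.inl (h ▸ hBA')
  · refine Or.inr (Set.eq_empty_iff_forall_notMem.mpr fun x ⟨hxB, hxA⟩ => ?_)
    exact h (atom_eq hpart hA' hA (hBA' hxB) hxA)

lemma setIntegral_mval (hpart : IsPartitionSeq D) (h : ℕ → Set Ω → ℝ) (k : ℕ)
    {A : Set Ω} (hA : MeasurableSet A) :
    ∫ x in A, mval D h k x ∂P = ∑ B ∈ D k, h k B * (P (B ∩ A)).toReal := by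
  unfold mval
  rw [integral_finset_sum _ (fun B hB => (integrable_const _).indicator (hpart.1 k B hB))]
  refine Finset.sum_congr rfl fun B hB => ?_
  rw [integral_indicator_const _ (hpart.1 k B hB), measureReal_def, Measure.restrict_apply (hpart.1 k B hB)]
  simp [mul_comm]

open Classical in
/-- The atoms of `D k` contained in `A`. -/
def children (D : ℕ → Finset (Set Ω)) (k : ℕ) (A : Set Ω) : Finset (Set Ω) :=
  (D k).filter (fun B => B ⊆ A)

lemma mem_children {D : ℕ → Finset (Set Ω)} {k : ℕ} {A B : Set Ω} :
    B ∈ children D k A ↔ B ∈ D k ∧ B ⊆ A := by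
  classical
  simp [children]

lemma setIntegral_mval_atom (hpart : IsPartitionSeq D) (h : ℕ → Set Ω → ℝ) {j k : ℕ}
    (hjk : j ≤ k) {A : Set Ω} (hA : A ∈ D j) :
    ∫ x in A, mval D h k x ∂P
      = ∑ B ∈ children D k A, h k B * (P B).toReal := by
  classical
  rw [setIntegral_mval hpart h k (hpart.1 j A hA), children, Finset.sum_filter]
  refine Finset.sum_congr rfl fun B hB => ?_
  by_cases hsub : B ⊆ A
  · rw [if_pos hsub, Set.inter_eq_left.mpr hsub]
  · rw [if_neg hsub]
    rcases atom_subset_or_disjoint hpart hjk hB hA with h1 | h1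
    · exact absurd h1 hsub
    · simp [h1]

lemma atom_eq_biUnion (hpart : IsPartitionSeq D) {j k : ℕ} (hjk : j ≤ k)
    {A : Set Ω} (hA : A ∈ D j) :
    A = ⋃ B ∈ children D k A, (B : Set Ω) := by
  classical
  ext x
  simp only [Set.mem_iUnion, mem_children, exists_prop]
  constructor
  · intro hx
    obtain ⟨B, hB, hxB⟩ := exists_atom hpart k x
    rcases atom_subset_or_disjoint hpart hjk hB hA with h1 | h1
    · exact ⟨B, ⟨hB, h1⟩, hxB⟩
    · obtain ⟨A', hA', hBA'⟩ := exists_superatom hpart hjk B hB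
      have : A' = A := atom_eq hpart hA' hA (hBA' hxB) hx
      exact ⟨B, ⟨hB, this ▸ hBA'⟩, hxB⟩
  · rintro ⟨B, ⟨_, hBA⟩, hxB⟩
    exact hBA hxB

lemma measure_atom_sum (hpart : IsPartitionSeq D) {j k : ℕ} (hjk : j ≤ k)
    {A : Set Ω} (hA : A ∈ D j) :
    ∑ B ∈ children D k A, P B = P A := by
  classical
  conv_rhs => rw [atom_eq_biUnion hpart hjk hA]
  exact (measure_biUnion_finset
    ((hpart.2.2.1 k).subset (fun B hB => Finset.mem_coe.mpr
      (mem_children.mp (Finset.mem_coe.mp hB)).1))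
    (fun B hB => hpart.1 k B (mem_children.mp hB).1)).symm

lemma setIntegral_mval_self (hpart : IsPartitionSeq D) (h : ℕ → Set Ω → ℝ) {m : ℕ}
    {F : Set Ω} (hF : F ∈ D m) :
    ∫ x in F, mval D h m x ∂P = h m F * (P F).toReal := by
  classical
  rw [setIntegral_mval_atom hpart h le_rfl hF]
  have hfil : children D m F = {F} := by
    ext B
    simp only [mem_children, Finset.mem_singleton]
    constructor
    · rintro ⟨hB, hBF⟩
      obtain ⟨x, hx⟩ := hpart.2.1 m B hB
      exact atom_eq hpart hB hF hx (hBF hx)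
    · rintro rfl; exact ⟨hF, subset_rfl⟩
  rw [hfil, Finset.sum_singleton]

end Aux

section Step
variable [MeasurableSpace Ω] {P : Measure Ω} [IsFiniteMeasure P] {D : ℕ → Finset (Set Ω)}

lemma step_lemma (hpart : IsPartitionSeq D) (hA : AssumptionA P D)
    (f : ℕ → Set Ω → ℝ) (hf : IsMart P D f) (w : ℝ)
    (j : ℕ) (F₀ : Set Ω) (hF₀ : F₀ ∈ D j) :
    ∃ m, j < m ∧ F₀ ∈ D (m - 1) ∧ ∃ F ∈ D m, F ⊆ F₀ ∧ 0 < P (F₀ \ F) ∧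
      (∫ x in F, mval D f m x ∂P - w * (P F).toReal) ≥
        min 0 (∫ x in F₀, mval D f j x ∂P - w * (P F₀).toReal) / 2 := by
  classical
  have hex : ∃ m, j < m ∧ F₀ ∉ D m := hA.2 j F₀ hF₀
  set m := Nat.find hex with hm
  obtain ⟨hjm, hF₀m⟩ := Nat.find_spec hex
  have hFm1 : F₀ ∈ D (m - 1) := by
    rcases Nat.lt_or_ge j (m - 1) with h | h
    · by_contra hc
      exact Nat.find_min hex (by omega) ⟨h, hc⟩
    · have hj : m - 1 = j := by omega
      rw [hj]; exact hF₀
  set S := children D m F₀ with hS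
  have hcover : ∀ x ∈ F₀, ∃ B ∈ S, x ∈ B := by
    intro x hx
    obtain ⟨B, hB, hxB⟩ := exists_atom hpart m x
    obtain ⟨A, hAj, hBA⟩ := exists_superatom hpart hjm.le B hB
    have hAe : A = F₀ := atom_eq hpart hAj hF₀ (hBA hxB) hx
    exact ⟨B, mem_children.mpr ⟨hB, hAe ▸ hBA⟩, hxB⟩
  have hne : S.Nonempty := by
    obtain ⟨x, hx⟩ := hpart.2.1 j F₀ hF₀
    obtain ⟨B, hB, _⟩ := hcover x hx
    exact ⟨B, hB⟩
  have hScard : 2 ≤ S.card := by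
    rcases Nat.lt_or_ge 1 S.card with h | h
    · exact h
    · exfalso
      have hc1 : S.card = 1 := le_antisymm h (Finset.card_pos.mpr hne)
      obtain ⟨B, hBeq⟩ := Finset.card_eq_one.mp hc1
      have hBS : B ∈ S := hBeq ▸ Finset.mem_singleton_self B
      have hBF : F₀ = B := by
        rw [atom_eq_biUnion hpart hjm.le hF₀, ← hS, hBeq]; simp
      have hmem : F₀ ∈ D m := by rw [hBF]; exact (mem_children.mp hBS).1
      exact hF₀m hmem
  -- the value-sum identity
  have hPsumR : ∑ B ∈ S, (P B).toReal = (P F₀).toReal := by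
    rw [← measure_atom_sum hpart hjm.le hF₀ (k := m), ENNReal.toReal_sum
      (fun B _ => measure_ne_top P B)]
  have hsum : ∫ x in F₀, mval D f j x ∂P = ∑ B ∈ S, f m B * (P B).toReal := by
    rw [hf.2 j m hjm.le F₀ hF₀, setIntegral_mval_atom hpart f hjm.le hF₀]
  have hphi : ∑ B ∈ S, (f m B * (P B).toReal - w * (P B).toReal)
      = ∫ x in F₀, mval D f j x ∂P - w * (P F₀).toReal := by
    rw [Finset.sum_sub_distrib, ← Finset.mul_sum, hPsumR, ← hsum]
  obtain ⟨F, hFS, hFmax⟩ := Finset.exists_max_image S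
    (fun B => f m B * (P B).toReal - w * (P B).toReal) hne
  obtain ⟨hFDm, hFF₀⟩ := mem_children.mp hFS
  refine ⟨m, hjm, hFm1, F, hFDm, hFF₀, ?_, ?_⟩
  · -- positive measure of F₀ \ F
    obtain ⟨B, hBS, hBF⟩ := Finset.exists_mem_ne hScard F
    have hBover : B ∈ S := hBS
    obtain ⟨hBDm, hBF₀⟩ := mem_children.mp hBover
    have hdisj : Disjoint B F := hpart.2.2.1 m (Finset.mem_coe.mpr hBDm)
      (Finset.mem_coe.mpr hFDm) hBF
    have hBsub : B ⊆ F₀ \ F := fun x hx =>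
      ⟨hBF₀ hx, fun hxF => (Set.disjoint_left.mp hdisj) hx hxF⟩
    exact lt_of_lt_of_le (hA.1 m B hBDm) (measure_mono hBsub)
  · -- the value bound
    rw [setIntegral_mval_self hpart f hFDm]
    set φ := fun B => f m B * (P B).toReal - w * (P B).toReal with hφ
    have hsumle : ∑ B ∈ S, φ B ≤ S.card • φ F :=
      Finset.sum_le_card_nsmul S φ (φ F) (fun B hB => hFmax B hB)
    have hcard2 : (2 : ℝ) ≤ (S.card : ℝ) := by exact_mod_cast hScard
    have hkey : ∫ x in F₀, mval D f j x ∂P - w * (P F₀).toReal ≤ (S.card : ℝ) * φ F := by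
      rw [← hphi]
      simpa [nsmul_eq_mul] using hsumle
    have hφF : φ F = f m F * (P F).toReal - w * (P F).toReal := by rw [hφ]
    clear_value φ
    rcases le_or_gt 0 (∫ x in F₀, mval D f j x ∂P - w * (P F₀).toReal) with h0 | h0
    · rw [min_eq_left h0]
      have : 0 ≤ φ F := by nlinarith
      rw [← hφF]; simpa using this
    · rw [min_eq_right h0.le]
      rcases le_or_gt 0 (φ F) with h1 | h1
      · have : (∫ x in F₀, mval D f j x ∂P - w * (P F₀).toReal) / 2 ≤ 0 := by linarith
        rw [← hφF]; exact le_trans this h1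
      · have h3 : ((S.card : ℝ) - 2) * φ F ≤ 0 :=
          mul_nonpos_of_nonneg_of_nonpos (by linarith) h1.le
        rw [sub_mul] at h3
        have h2 : (∫ x in F₀, mval D f j x ∂P - w * (P F₀).toReal) / 2 ≤ φ F := by linarith
        rw [← hφF]; exact h2

lemma claim_lemma (hpart : IsPartitionSeq D) (hA : AssumptionA P D)
    (f : ℕ → Set Ω → ℝ) (hf : IsMart P D f) (w : ℝ) :
    ∀ k j (F₀ : Set Ω), F₀ ∈ D j →
    ∃ m, j < m ∧ ∃ Fp ∈ D (m - 1), ∃ F ∈ D m, F ⊆ Fp ∧ Fp ⊆ F₀ ∧ 0 < P (Fp \ F) ∧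
      (∫ x in F, mval D f m x ∂P - w * (P F).toReal) ≥
        min 0 (∫ x in F₀, mval D f j x ∂P - w * (P F₀).toReal) / 2 ^ (k + 1) := by
  intro k
  induction k with
  | zero =>
    intro j F₀ hF₀
    obtain ⟨m, hjm, hFm1, F, hF, hFF₀, hpos, hval⟩ := step_lemma hpart hA f hf w j F₀ hF₀
    exact ⟨m, hjm, F₀, hFm1, F, hF, hFF₀, subset_rfl, hpos, by simpa using hval⟩
  | succ k ih =>
    intro j F₀ hF₀
    obtain ⟨m₁, hjm₁, hFm1₁, F₁, hF₁, hF₁F₀, hpos₁, hval₁⟩ := step_lemma hpart hA f hf w j F₀ hF₀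
    obtain ⟨m, hm₁m, Fp, hFp, F, hF, hFFp, hFpF₁, hpos, hval⟩ := ih m₁ F₁ hF₁
    refine ⟨m, lt_trans hjm₁ hm₁m, Fp, hFp, F, hF, hFFp, hFpF₁.trans hF₁F₀, hpos, ?_⟩
    set X := ∫ x in F₀, mval D f j x ∂P - w * (P F₀).toReal with hX
    set Y := ∫ x in F₁, mval D f m₁ x ∂P - w * (P F₁).toReal with hY
    set Z := ∫ x in F, mval D f m x ∂P - w * (P F).toReal with hZ
    have hmin0 : min 0 X ≤ 0 := min_le_left 0 X
    have h1 : min 0 X / 2 ≤ min 0 Y := le_min (by linarith) hval₁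
    have h2 : (min 0 X / 2) / 2 ^ (k + 1) ≤ min 0 Y / 2 ^ (k + 1) := by
      gcongr
    have h3 : (min 0 X / 2) / 2 ^ (k + 1) = min 0 X / 2 ^ (k + 1 + 1) := by
      rw [div_div, ← pow_succ']
    rw [← h3]
    exact le_trans h2 hval

end Step

/-- Lemma (l:klicove): let `f ∈ M₁`, `η, w > 0`, `n ∈ ℕ` and `E ∈ D n`. Then there are a
martingale `g ∈ M₁`, `m ∈ ℕ` and `F ∈ D m` with (a) `g_1 = … = g_n = 0`, (b) `‖g‖₁ < η`,
(c) `m > n` and `F ⊆ E`, and (d) `(f_m + g_m)(F) > w`. -/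
theorem statement18 [MeasurableSpace Ω] (P : Measure Ω) [IsProbabilityMeasure P]
    (D : ℕ → Finset (Set Ω)) (hpart : IsPartitionSeq D) (hA : AssumptionA P D)
    (f : ℕ → Set Ω → ℝ) (hf : IsMart P D f) (hfb : martNorm P D 1 f ≠ ∞)
    (η w : ℝ) (hη : 0 < η) (hw : 0 < w) (n : ℕ) (E : Set Ω) (hE : E ∈ D n) :
    ∃ g : ℕ → Set Ω → ℝ, IsMart P D g ∧ martNorm P D 1 g ≠ ∞ ∧
      (∀ k ≤ n, ∀ A : Set Ω, g k A = 0) ∧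
      martNorm P D 1 g < ENNReal.ofReal η ∧
      ∃ m : ℕ, n < m ∧ ∃ F ∈ D m, F ⊆ E ∧ f m F + g m F > w := by
  classical
  set Φ₀ := ∫ x in E, mval D f n x ∂P - w * (P E).toReal with hΦ₀
  have hη8 : (0:ℝ) < η / 8 := by linarith
  obtain ⟨k, hk⟩ := pow_unbounded_of_one_lt (R := ℝ) (-(min 0 Φ₀) / (η / 8)) one_lt_two
  have hkb : -(η / 8) ≤ min 0 Φ₀ / 2 ^ (k + 1) := by
    rw [le_div_iff₀ (by positivity : (0:ℝ) < 2 ^ (k + 1))]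
    have hk' : -(min 0 Φ₀) < 2 ^ k * (η / 8) := by
      rw [div_lt_iff₀ hη8] at hk; linarith
    have hpow : (2:ℝ) ^ k ≤ 2 ^ (k + 1) := by
      apply pow_le_pow_right₀ (by norm_num) (Nat.le_succ k)
    have := mul_le_mul_of_nonneg_right hpow hη8.le
    linarith
  obtain ⟨m, hnm, Fp, hFpD, F, hFD, hFFp, hFpE, hPdiff, hΦF⟩ :=
    claim_lemma hpart hA f hf w k n E hE
  rw [← hΦ₀] at hΦF
  have hFE : F ⊆ E := hFFp.trans hFpE
  have hmeasF : MeasurableSet F := hpart.1 m F hFD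
  have hmeasFp : MeasurableSet Fp := hpart.1 (m - 1) Fp hFpD
  have hmeasDiff : MeasurableSet (Fp \ F) := hmeasFp.diff hmeasF
  have hPF : 0 < P F := hA.1 m F hFD
  set PFr := (P F).toReal with hPFr
  have hPFr0 : 0 < PFr := ENNReal.toReal_pos hPF.ne' (measure_ne_top P F)
  have hPFr1 : PFr ≤ 1 := by
    have h1 : P F ≤ 1 := prob_le_one
    have := ENNReal.toReal_mono ENNReal.one_ne_top h1
    simpa using this
  set ΦF := ∫ x in F, mval D f m x ∂P - w * PFr with hΦF_def
  have hΦFlb : -(η / 8) ≤ ΦF := le_trans hkb hΦF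
  set c := max (-(ΦF / PFr)) 0 + η / 8 with hc
  have hc0 : 0 < c := by
    have := le_max_right (-(ΦF / PFr)) 0
    rw [hc]; linarith
  set Q := (P (Fp \ F)).toReal with hQ
  have hQ0 : 0 < Q := ENNReal.toReal_pos hPdiff.ne' (measure_ne_top _ _)
  set v := -(c * PFr) / Q with hv
  set g : ℕ → Set Ω → ℝ := fun k' A =>
    if m ≤ k' ∧ A ∈ D k' ∧ A ⊆ F then c
    else if m ≤ k' ∧ A ∈ D k' ∧ A ⊆ Fp then v else 0 with hg
  -- pointwise description of `mval D g k'` for `k' ≥ m`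
  have hmval_g : ∀ k', m ≤ k' → mval D g k' = fun x =>
      F.indicator (fun _ => c) x + (Fp \ F).indicator (fun _ => v) x := by
    intro k' hmk'
    funext x
    obtain ⟨B₀, hB₀, hxB₀⟩ := exists_atom hpart k' x
    have hsingle : mval D g k' x = g k' B₀ := by
      unfold mval
      rw [Finset.sum_eq_single B₀]
      · rw [Set.indicator_of_mem hxB₀]
      · intro B hB hne
        rw [Set.indicator_of_notMem]
        intro hxB
        exact hne (atom_eq hpart hB hB₀ hxB hxB₀)
      · intro h; exact absurd hB₀ h
    rw [hsingle]
    have hm1k' : m - 1 ≤ k' := by omega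
    rcases atom_subset_or_disjoint hpart hmk' hB₀ hFD with hsubF | hdisF
    · have hxF : x ∈ F := hsubF hxB₀
      simp only [hg]
      rw [if_pos ⟨hmk', hB₀, hsubF⟩, Set.indicator_of_mem hxF,
        Set.indicator_of_notMem (fun h => h.2 hxF)]
      ring
    · have hxnF : x ∉ F := fun hxF =>
        (Set.eq_empty_iff_forall_notMem.mp hdisF x) ⟨hxB₀, hxF⟩
      have hnot1 : ¬ B₀ ⊆ F := fun h => hxnF (h hxB₀)
      rcases atom_subset_or_disjoint hpart hm1k' hB₀ hFpD with hsubFp | hdisFp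
      · have hxFp : x ∈ Fp := hsubFp hxB₀
        simp only [hg]
        rw [if_neg (fun h => hnot1 h.2.2), if_pos ⟨hmk', hB₀, hsubFp⟩,
          Set.indicator_of_notMem hxnF, Set.indicator_of_mem (show x ∈ Fp \ F from ⟨hxFp, hxnF⟩)]
        ring
      · have hxnFp : x ∉ Fp := fun hxFp =>
          (Set.eq_empty_iff_forall_notMem.mp hdisFp x) ⟨hxB₀, hxFp⟩
        have hnot2 : ¬ B₀ ⊆ Fp := fun h => hxnFp (h hxB₀)
        simp only [hg]
        rw [if_neg (fun h => hnot1 h.2.2), if_neg (fun h => hnot2 h.2.2),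
          Set.indicator_of_notMem hxnF, Set.indicator_of_notMem (fun h => hxnFp h.1)]
        ring
  have hmval0 : ∀ k', k' < m → mval D g k' = fun _ => 0 := by
    intro k' hk'
    funext x
    unfold mval
    apply Finset.sum_eq_zero
    intro B hB
    have hgz : g k' B = 0 := by
      simp only [hg]
      rw [if_neg (fun h => absurd h.1 (by omega)), if_neg (fun h => absurd h.1 (by omega))]
    rw [hgz]
    simp
  have hintconst : ∀ (A : Set Ω), MeasurableSet A →
      (∫ x in A, (F.indicator (fun _ => c) x + (Fp \ F).indicator (fun _ => v) x) ∂P)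
        = c * (P (F ∩ A)).toReal + v * (P ((Fp \ F) ∩ A)).toReal := by
    intro A hAm
    rw [integral_add (((integrable_const c).indicator hmeasF).integrableOn)
        (((integrable_const v).indicator hmeasDiff).integrableOn),
      integral_indicator_const _ hmeasF, integral_indicator_const _ hmeasDiff, measureReal_def, measureReal_def,
      Measure.restrict_apply hmeasF, Measure.restrict_apply hmeasDiff]
    simp [mul_comm]
  have hgmart : IsMart P D g := by
    constructor
    · intro k' A hA'
      simp only [hg]
      rw [if_neg (fun h => hA' h.2.1), if_neg (fun h => hA' h.2.1)]
    · intro j' k' hjk' A hAmem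
      have hAmeas := hpart.1 j' A hAmem
      by_cases hk' : m ≤ k'
      · by_cases hj' : m ≤ j'
        · rw [hmval_g j' hj', hmval_g k' hk']
        · have hj'' : j' < m := by omega
          rw [hmval0 j' hj'', hmval_g k' hk']
          simp only [integral_zero]
          rw [hintconst A hAmeas]
          have hj1 : j' ≤ m - 1 := by omega
          rcases atom_subset_or_disjoint hpart hj1 hFpD hAmem with hsub | hdis
          · have hFA : F ∩ A = F := Set.inter_eq_left.mpr (hFFp.trans hsub)
            have hDA : (Fp \ F) ∩ A = Fp \ F := Set.inter_eq_left.mpr (Set.diff_subset.trans hsub)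
            rw [hFA, hDA, ← hPFr, ← hQ, hv]
            field_simp
            ring
          · have hFA : F ∩ A = ∅ := by
              apply Set.eq_empty_of_subset_empty
              rw [← hdis]
              exact Set.inter_subset_inter_left A hFFp
            have hDA : (Fp \ F) ∩ A = ∅ := by
              apply Set.eq_empty_of_subset_empty
              rw [← hdis]
              exact Set.inter_subset_inter_left A Set.diff_subset
            rw [hFA, hDA]
            simp
      · have hk'' : k' < m := by omega
        have hj'' : j' < m := by omega
        rw [hmval0 j' hj'', hmval0 k' hk'']
  -- numeric bound on c * PFr
  have hcPF : c * PFr ≤ η / 4 := by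
    have h1 : max (-(ΦF / PFr)) 0 * PFr ≤ η / 8 := by
      rcases le_total (-(ΦF / PFr)) 0 with h | h
      · rw [max_eq_right h, zero_mul]; linarith
      · rw [max_eq_left h]
        have he : -(ΦF / PFr) * PFr = -ΦF := by field_simp
        rw [he]; linarith
    have h2 : (η / 8) * PFr ≤ η / 8 := by nlinarith
    have hce : c * PFr = max (-(ΦF / PFr)) 0 * PFr + (η / 8) * PFr := by
      rw [hc]; ring
    rw [hce]; linarith
  have habsv : |v| * Q = c * PFr := by
    rw [hv, abs_div, abs_neg, abs_of_pos (mul_pos hc0 hPFr0), abs_of_pos hQ0]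
    field_simp
  have hnorm : ∀ k', eLpNorm (mval D g k') 1 P ≤ ENNReal.ofReal (η / 2) := by
    intro k'
    by_cases hk' : m ≤ k'
    · rw [hmval_g k' hk']
      have hb : eLpNorm (fun x => F.indicator (fun _ => c) x
            + (Fp \ F).indicator (fun _ => v) x) 1 P
          ≤ eLpNorm (F.indicator (fun _ => c)) 1 P
            + eLpNorm ((Fp \ F).indicator (fun _ => v)) 1 P :=
        eLpNorm_add_le ((stronglyMeasurable_const.indicator hmeasF).aestronglyMeasurable)
          ((stronglyMeasurable_const.indicator hmeasDiff).aestronglyMeasurable) le_rfl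
      refine le_trans hb ?_
      rw [eLpNorm_indicator_const hmeasF one_ne_zero ENNReal.one_ne_top,
        eLpNorm_indicator_const hmeasDiff one_ne_zero ENNReal.one_ne_top]
      have hPFeq : P F = ENNReal.ofReal PFr := (ENNReal.ofReal_toReal (measure_ne_top P F)).symm
      have hQeq : P (Fp \ F) = ENNReal.ofReal Q := (ENNReal.ofReal_toReal (measure_ne_top P _)).symm
      have e1 : ‖c‖ₑ * P F ^ ((1 : ℝ≥0∞).toReal)⁻¹ = ENNReal.ofReal (c * PFr) := by
        rw [ENNReal.toReal_one, inv_one, ENNReal.rpow_one, hPFeq,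
          Real.enorm_eq_ofReal hc0.le, ← ENNReal.ofReal_mul hc0.le]
      have e2 : ‖v‖ₑ * P (Fp \ F) ^ ((1 : ℝ≥0∞).toReal)⁻¹ = ENNReal.ofReal (c * PFr) := by
        rw [ENNReal.toReal_one, inv_one, ENNReal.rpow_one, hQeq,
          Real.enorm_eq_ofReal_abs, ← ENNReal.ofReal_mul (abs_nonneg v), habsv]
      rw [one_div] at *
      rw [e1, e2, ← ENNReal.ofReal_add (by positivity) (by positivity)]
      apply ENNReal.ofReal_le_ofReal
      linarith
    · rw [hmval0 k' (by omega)]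
      rw [show (fun _ : Ω => (0:ℝ)) = (0 : Ω → ℝ) from rfl, eLpNorm_zero]
      exact zero_le
  have hmnorm : martNorm P D 1 g ≤ ENNReal.ofReal (η / 2) := by
    unfold martNorm lpNorm
    exact iSup_le hnorm
  have hlt : martNorm P D 1 g < ENNReal.ofReal η :=
    lt_of_le_of_lt hmnorm (by rw [ENNReal.ofReal_lt_ofReal_iff hη]; linarith)
  refine ⟨g, hgmart, (hlt.trans ENNReal.ofReal_lt_top).ne, ?_, hlt, m, hnm, F, hFD, hFE, ?_⟩
  · intro k' hk' A
    simp only [hg]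
    rw [if_neg (fun h => absurd h.1 (by omega)), if_neg (fun h => absurd h.1 (by omega))]
  · have hgmF : g m F = c := by
      simp only [hg]
      rw [if_pos ⟨le_rfl, hFD, subset_rfl⟩]
    have hfmF : ΦF = (f m F - w) * PFr := by
      rw [hΦF_def, setIntegral_mval_self hpart f hFD, ← hPFr]; ring
    have h5 : f m F - w = ΦF / PFr := by
      rw [hfmF]; field_simp
    have h6 : ΦF / PFr + c ≥ η / 8 := by
      have := le_max_left (-(ΦF / PFr)) 0
      rw [hc]; linarith
    rw [hgmF]
    clear_value ΦF PFr c
    linarith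


end MartingalePaper
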